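/- Let M := max_{x∈V} d_x^{-1/2}. For all λ, μ > 0 and all x, y ∈ V, the inequality |KD_λ(x,y) − KD_μ(x,y)| ≤ 2·M·vol(V)^{1/2}·|λ − μ| holds. -/

import Mathlib

set_option linter.unusedSectionVars false
set_option linter.unusedVariables false
set_option maxHeartbeats 1000000


open scoped BigOperators

noncomputable section

namespace HypRicci

variable {V : Type*} [Fintype V] [DecidableEq V]

/-- A finite weighted hypergraph on vertex set `V`: a finite set of nonempty
hyperedges together with positive weights. -/
structure Hypergraph (V : Type*) [Fintype V] [DecidableEq V] : Type _ where
  E : Finset (Finset V)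
  w : Finset V → ℝ
  w_pos : ∀ e ∈ E, 0 < w e
  e_nonempty : ∀ e ∈ E, e.Nonempty

/-- Degree `d_x = ∑_{e ∋ x} w(e)`. -/
def deg (H : Hypergraph V) (x : V) : ℝ := ∑ e ∈ H.E, if x ∈ e then H.w e else 0

/-- Volume `vol(V) = ∑_x d_x`. -/
def vol (H : Hypergraph V) : ℝ := ∑ x, deg H x

/-- Weighted inner product `⟨f,g⟩ = ∑_x f(x) g(x) / d_x`. -/
def inn (H : Hypergraph V) (f g : V → ℝ) : ℝ := ∑ x, f x * g x / deg H x

/-- Norm associated to `inn`. -/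
def nrm (H : Hypergraph V) (f : V → ℝ) : ℝ := Real.sqrt (inn H f f)

/-- Indicator function `δ_x`. -/
def delta (x : V) : V → ℝ := fun z => if z = x then 1 else 0

/-- Standard (unweighted) dot product `u^⊤ v`. -/
def dot (u v : V → ℝ) : ℝ := ∑ x, u x * v x

/-- Base polytope `B_e = conv{δ_x − δ_y : x,y ∈ e}`. -/
def Bp (e : Finset V) : Set (V → ℝ) :=
  convexHull ℝ {b : V → ℝ | ∃ x ∈ e, ∃ y ∈ e, b = delta x - delta y}

/-- The multivalued hypergraph Laplacian
`L(f) = {∑_e w(e) (b_e^⊤ f) b_e : b_e ∈ argmax_{b ∈ B_e} b^⊤ f}`. -/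
def Lap (H : Hypergraph V) (f : V → ℝ) : Set (V → ℝ) :=
  { g | ∃ b : Finset V → (V → ℝ),
      (∀ e ∈ H.E, b e ∈ Bp e ∧ ∀ b' ∈ Bp e, dot b' f ≤ dot (b e) f) ∧
      g = ∑ e ∈ H.E, (H.w e * dot (b e) f) • b e }

/-- `D⁻¹ f`. -/
def Dinv (H : Hypergraph V) (f : V → ℝ) : V → ℝ := fun x => f x / deg H x

/-- Normalized Laplacian `𝓛(f) = L(D⁻¹ f)`. -/
def NL (H : Hypergraph V) (f : V → ℝ) : Set (V → ℝ) := Lap H (Dinv H f)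

/-- The resolvent `J_λ = (I + λ𝓛)⁻¹`: it sends `f` to the (unique) `g` with
`f ∈ g + λ 𝓛(g)`. -/
def Resolvent (H : Hypergraph V) (l : ℝ) (f : V → ℝ) : V → ℝ :=
  Classical.epsilon fun g => ∃ h ∈ NL H g, f = g + l • h

/-- Adjacency: `x ∼ y` iff some hyperedge contains both. -/
def Adj (H : Hypergraph V) (x y : V) : Prop := ∃ e ∈ H.E, x ∈ e ∧ y ∈ e

/-- There is a chain of length `n` of successively adjacent vertices from `x` to `y`. -/
def chainProp (H : Hypergraph V) (x y : V) (n : ℕ) : Prop :=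
  ∃ z : ℕ → V, z 0 = x ∧ z n = y ∧ ∀ i < n, Adj H (z i) (z (i + 1))

/-- Connectedness of the hypergraph. -/
def Connected (H : Hypergraph V) : Prop := ∀ x y : V, ∃ n, chainProp H x y n

/-- Graph distance (as a natural number). -/
def hdistN (H : Hypergraph V) (x y : V) : ℕ := sInf {n | chainProp H x y n}

/-- Graph distance `d(x,y)` as a real number. -/
def gdist (H : Hypergraph V) (x y : V) : ℝ := (hdistN H x y : ℝ)

/-- Diameter `diam(H) = max_{x,y} d(x,y)`. -/
def hdiam (H : Hypergraph V) : ℝ :=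
  (((Finset.univ : Finset (V × V)).sup fun p => hdistN H p.1 p.2 : ℕ) : ℝ)

/-- Weighted `1`-Lipschitz functions: `⟨f, δ_x − δ_y⟩ ≤ d(x,y)` for all `x, y`. -/
def Lip1 (H : Hypergraph V) : Set (V → ℝ) :=
  { f | ∀ x y : V, inn H f (delta x - delta y) ≤ gdist H x y }

/-- The `λ`-nonlinear Kantorovich difference. -/
def KD (H : Hypergraph V) (l : ℝ) (x y : V) : ℝ :=
  sSup { r | ∃ f ∈ Lip1 H, r = inn H (Resolvent H l f) (delta x - delta y) }

/-- `κ_λ(x,y) = 1 − KD_λ(x,y)/d(x,y)`. -/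
def kappa (H : Hypergraph V) (l : ℝ) (x y : V) : ℝ := 1 - KD H l x y / gdist H x y

/-- Lower coarse Ricci curvature `κ̲(x,y) = liminf_{λ↓0} κ_λ(x,y)/λ`. -/
def kappaLower (H : Hypergraph V) (x y : V) : EReal :=
  Filter.liminf (fun l : ℝ => ((kappa H l x y / l : ℝ) : EReal)) (nhdsWithin 0 (Set.Ioi 0))

/-- Upper coarse Ricci curvature `κ̄(x,y) = limsup_{λ↓0} κ_λ(x,y)/λ`. -/
def kappaUpper (H : Hypergraph V) (x y : V) : EReal :=
  Filter.limsup (fun l : ℝ => ((kappa H l x y / l : ℝ) : EReal)) (nhdsWithin 0 (Set.Ioi 0))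

/-- Canonical restriction `𝓛⁰ f`: the unique element of minimal norm of `𝓛(f)`. -/
def L0 (H : Hypergraph V) (f : V → ℝ) : V → ℝ :=
  Classical.epsilon fun g => g ∈ NL H f ∧ ∀ h ∈ NL H f, nrm H g ≤ nrm H h

/-- The stationary distribution `π(x) = d_x / vol(V)`. -/
def piH (H : Hypergraph V) : V → ℝ := fun x => deg H x / vol H

/-- The energy `Q(h) = (1/2) ∑_e w(e) max_{x,y ∈ e} (h(x) − h(y))²`. -/
def Qform (H : Hypergraph V) (h : V → ℝ) : ℝ :=
  (1 / 2) * ∑ e ∈ H.E, H.w e * sSup { r | ∃ x ∈ e, ∃ y ∈ e, r = (h x - h y) ^ 2 }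


variable {H : Hypergraph V}

lemma inn_self_nonneg (hdeg : ∀ x : V, 0 < deg H x) (f : V → ℝ) : 0 ≤ inn H f f :=
  Finset.sum_nonneg fun x _ => div_nonneg (mul_self_nonneg _) (hdeg x).le

lemma nrm_sq (hdeg : ∀ x : V, 0 < deg H x) (f : V → ℝ) : nrm H f ^ 2 = inn H f f :=
  Real.sq_sqrt (inn_self_nonneg hdeg f)

lemma nrm_nonneg (f : V → ℝ) : 0 ≤ nrm H f := Real.sqrt_nonneg _

lemma inn_comm (f g : V → ℝ) : inn H f g = inn H g f := by
  unfold inn; congr 1; ext x; rw [mul_comm]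

lemma inn_add_left (f g h : V → ℝ) : inn H (f + g) h = inn H f h + inn H g h := by
  unfold inn; rw [← Finset.sum_add_distrib]; congr 1; ext x
  simp [Pi.add_apply, add_mul, add_div]

lemma inn_smul_left (c : ℝ) (f g : V → ℝ) : inn H (c • f) g = c * inn H f g := by
  unfold inn; rw [Finset.mul_sum]; congr 1; ext x
  simp [Pi.smul_apply, smul_eq_mul]; ring

lemma inn_neg_left (f g : V → ℝ) : inn H (-f) g = - inn H f g := by
  have := inn_smul_left (H := H) (-1) f g; simpa using this

lemma inn_sub_left (f g h : V → ℝ) : inn H (f - g) h = inn H f h - inn H g h := by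
  rw [sub_eq_add_neg, inn_add_left, inn_neg_left, sub_eq_add_neg]

lemma inn_sub_right (f g h : V → ℝ) : inn H f (g - h) = inn H f g - inn H f h := by
  rw [inn_comm, inn_sub_left, inn_comm g f, inn_comm h f]

lemma inn_le (hdeg : ∀ x : V, 0 < deg H x) (f g : V → ℝ) :
    inn H f g ≤ nrm H f * nrm H g := by
  have key : inn H f g = ∑ x, (f x / Real.sqrt (deg H x)) * (g x / Real.sqrt (deg H x)) := by
    unfold inn; congr 1; ext x
    rw [div_mul_div_comm, Real.mul_self_sqrt (hdeg x).le]
  have h2 : ∀ (p : V → ℝ), ∑ x, (p x / Real.sqrt (deg H x)) ^ 2 = inn H p p := by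
    intro p; unfold inn; congr 1; ext x
    rw [div_pow, Real.sq_sqrt (hdeg x).le, sq]
  calc inn H f g = ∑ x, (f x / Real.sqrt (deg H x)) * (g x / Real.sqrt (deg H x)) := key
    _ ≤ Real.sqrt (∑ x, (f x / Real.sqrt (deg H x))^2) * Real.sqrt (∑ x, (g x / Real.sqrt (deg H x))^2) :=
        Real.sum_mul_le_sqrt_mul_sqrt _ _ _
    _ = nrm H f * nrm H g := by rw [h2, h2]; rfl

lemma abs_inn_le (hdeg : ∀ x : V, 0 < deg H x) (f g : V → ℝ) :
    |inn H f g| ≤ nrm H f * nrm H g := by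
  rcases abs_cases (inn H f g) with ⟨h, _⟩ | ⟨h, _⟩
  · rw [h]; exact inn_le hdeg f g
  · rw [h, ← inn_neg_left]
    have := inn_le hdeg (-f) g
    have hn : nrm H (-f) = nrm H f := by
      unfold nrm inn
      congr 1
      refine Finset.sum_congr rfl fun x _ => ?_
      have : (-f) x * (-f) x = f x * f x := by simp
      rw [this]
    rwa [hn] at this

lemma nrm_smul (c : ℝ) (f : V → ℝ) : nrm H (c • f) = |c| * nrm H f := by
  unfold nrm
  rw [inn_smul_left, inn_comm, inn_smul_left, ← mul_assoc]
  have : c * c * inn H f f = |c| ^ 2 * inn H f f := by rw [sq_abs, sq]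
  rw [this, Real.sqrt_mul (sq_nonneg _), Real.sqrt_sq (abs_nonneg _)]


/-- max over pairs in e of u x - u y -/
def mx (e : Finset V) (u : V → ℝ) : ℝ :=
  if h : (e ×ˢ e).Nonempty then (e ×ˢ e).sup' h (fun p => u p.1 - u p.2) else 0

lemma mx_eq {e : Finset V} (he : e.Nonempty) (u : V → ℝ) :
    mx e u = (e ×ˢ e).sup' (he.product he) (fun p => u p.1 - u p.2) := by
  rw [mx, dif_pos]

lemma le_mx {e : Finset V} {x y : V} (hx : x ∈ e) (hy : y ∈ e) (u : V → ℝ) :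
    u x - u y ≤ mx e u := by
  rw [mx_eq ⟨x, hx⟩ u]
  exact Finset.le_sup' (f := fun p : V × V => u p.1 - u p.2) (Finset.mk_mem_product hx hy)

lemma mx_nonneg {e : Finset V} (he : e.Nonempty) (u : V → ℝ) : 0 ≤ mx e u := by
  obtain ⟨x, hx⟩ := he
  simpa using le_mx hx hx u

lemma mx_le {e : Finset V} (he : e.Nonempty) {u : V → ℝ} {c : ℝ}
    (h : ∀ x ∈ e, ∀ y ∈ e, u x - u y ≤ c) : mx e u ≤ c := by
  rw [mx_eq he u]
  refine Finset.sup'_le _ _ fun p hp => ?_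
  rw [Finset.mem_product] at hp
  exact h p.1 hp.1 p.2 hp.2

lemma exists_mx_pair {e : Finset V} (he : e.Nonempty) (u : V → ℝ) :
    ∃ x ∈ e, ∃ y ∈ e, mx e u = u x - u y := by
  obtain ⟨p, hp, hval⟩ := Finset.exists_mem_eq_sup' (he.product he) (fun p : V × V => u p.1 - u p.2)
  rw [Finset.mem_product] at hp
  exact ⟨p.1, hp.1, p.2, hp.2, by rw [mx_eq he u, hval]⟩

lemma dot_delta (x : V) (u : V → ℝ) : dot (delta x) u = u x := by
  simp [dot, delta, ite_mul, one_mul, zero_mul, Finset.sum_ite_eq']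

lemma dot_sub_left' (a b u : V → ℝ) : dot (a - b) u = dot a u - dot b u := by
  unfold dot; rw [← Finset.sum_sub_distrib]; exact Finset.sum_congr rfl fun x _ => by
    simp [sub_mul]

lemma dot_delta_sub (x y : V) (u : V → ℝ) : dot (delta x - delta y) u = u x - u y := by
  rw [dot_sub_left', dot_delta, dot_delta]

lemma dot_add_left (a b u : V → ℝ) : dot (a + b) u = dot a u + dot b u := by
  unfold dot; rw [← Finset.sum_add_distrib]; exact Finset.sum_congr rfl fun x _ => by
    simp [add_mul]

lemma dot_smul_left (c : ℝ) (a u : V → ℝ) : dot (c • a) u = c * dot a u := by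
  unfold dot; rw [Finset.mul_sum]; exact Finset.sum_congr rfl fun x _ => by
    simp [smul_eq_mul]; ring

lemma dot_sub_left (a b u : V → ℝ) : dot (a - b) u = dot a u - dot b u := by
  have h := dot_add_left (a - b) b u; rw [sub_add_cancel] at h; linarith

lemma dot_sub_right (a u v : V → ℝ) : dot a (u - v) = dot a u - dot a v := by
  unfold dot; rw [← Finset.sum_sub_distrib]; exact Finset.sum_congr rfl fun x _ => by
    simp [mul_sub]

lemma dot_sum_left {ι : Type*} (s : Finset ι) (a : ι → V → ℝ) (u : V → ℝ) :
    dot (∑ i ∈ s, a i) u = ∑ i ∈ s, dot (a i) u := by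
  classical
  induction s using Finset.induction_on with
  | empty => simp [dot]
  | insert _ _ h ih => rw [Finset.sum_insert h, Finset.sum_insert h, dot_add_left, ih]

lemma gen_mem_Bp {e : Finset V} {x y : V} (hx : x ∈ e) (hy : y ∈ e) :
    delta x - delta y ∈ Bp e :=
  subset_convexHull ℝ _ ⟨x, hx, y, hy, rfl⟩

lemma dot_le_of_mem_Bp {e : Finset V} {b : V → ℝ} (hb : b ∈ Bp e) {u : V → ℝ} {c : ℝ}
    (h : ∀ x ∈ e, ∀ y ∈ e, u x - u y ≤ c) : dot b u ≤ c := by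
  have hconv : Convex ℝ {b : V → ℝ | dot b u ≤ c} := by
    intro b1 h1 b2 h2 s t hs ht hst
    simp only [Set.mem_setOf_eq] at *
    rw [dot_add_left, dot_smul_left, dot_smul_left]
    calc s * dot b1 u + t * dot b2 u ≤ s * c + t * c := by
          apply add_le_add <;> apply mul_le_mul_of_nonneg_left <;> assumption
      _ = c := by rw [← add_mul, hst, one_mul]
  have : Bp e ⊆ {b : V → ℝ | dot b u ≤ c} := by
    apply convexHull_min _ hconv
    rintro b ⟨x, hx, y, hy, rfl⟩
    simp only [Set.mem_setOf_eq, dot_delta_sub]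
    exact h x hx y hy
  exact this hb

lemma dot_le_mx_of_mem_Bp {e : Finset V} {b : V → ℝ} (hb : b ∈ Bp e) (u : V → ℝ) :
    dot b u ≤ mx e u :=
  dot_le_of_mem_Bp hb fun x hx y hy => le_mx hx hy u


-- ### Lap structure lemmas

lemma dot_comm (u v : V → ℝ) : dot u v = dot v u := by
  unfold dot; exact Finset.sum_congr rfl fun x _ => mul_comm _ _

lemma Lap_form {u h : V → ℝ} (hh : h ∈ Lap H u) :
    ∃ b : Finset V → (V → ℝ), (∀ e ∈ H.E, b e ∈ Bp e ∧ dot (b e) u = mx e u) ∧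
      h = ∑ e ∈ H.E, (H.w e * mx e u) • b e := by
  obtain ⟨b, hb, rfl⟩ := hh
  have hbe : ∀ e ∈ H.E, dot (b e) u = mx e u := by
    intro e he
    refine le_antisymm (dot_le_mx_of_mem_Bp (hb e he).1 u) ?_
    obtain ⟨x, hx, y, hy, hv⟩ := exists_mx_pair (H.e_nonempty e he) u
    rw [hv, ← dot_delta_sub]
    exact (hb e he).2 _ (gen_mem_Bp hx hy)
  refine ⟨b, fun e he => ⟨(hb e he).1, hbe e he⟩, ?_⟩
  exact Finset.sum_congr rfl fun e he => by rw [hbe e he]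

lemma Lap_nonempty (H : Hypergraph V) (u : V → ℝ) : ∃ h, h ∈ Lap H u := by
  have hsel : ∀ e ∈ H.E, ∃ be : V → ℝ, be ∈ Bp e ∧ ∀ b' ∈ Bp e, dot b' u ≤ dot be u := by
    intro e he
    obtain ⟨x, hx, y, hy, hv⟩ := exists_mx_pair (H.e_nonempty e he) u
    refine ⟨delta x - delta y, gen_mem_Bp hx hy, fun b' hb' => ?_⟩
    rw [dot_delta_sub, ← hv]
    exact dot_le_mx_of_mem_Bp hb' u
  classical
  refine ⟨_, fun e => if he : e ∈ H.E then (hsel e he).choose else 0, fun e he => ?_, rfl⟩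
  simp only [dif_pos he]
  exact (hsel e he).choose_spec

lemma Lap_mono {u u' p q : V → ℝ} (hp : p ∈ Lap H u) (hq : q ∈ Lap H u') :
    0 ≤ dot (p - q) (u - u') := by
  obtain ⟨b, hb, rfl⟩ := hp
  obtain ⟨c, hc, rfl⟩ := hq
  rw [dot_sub_left', dot_sum_left, dot_sum_left, ← Finset.sum_sub_distrib]
  refine Finset.sum_nonneg fun e he => ?_
  rw [dot_smul_left, dot_smul_left, dot_sub_right, dot_sub_right]
  obtain ⟨x, hx⟩ := H.e_nonempty e he
  have hzero : (0:ℝ) = dot (delta x - delta x) u := by rw [dot_delta_sub]; ring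
  have hzero' : (0:ℝ) = dot (delta x - delta x) u' := by rw [dot_delta_sub]; ring
  have ha : 0 ≤ dot (b e) u := by
    rw [hzero]; exact (hb e he).2 _ (gen_mem_Bp hx hx)
  have ha' : 0 ≤ dot (c e) u' := by
    rw [hzero']; exact (hc e he).2 _ (gen_mem_Bp hx hx)
  have h1 : dot (b e) u' ≤ dot (c e) u' := (hc e he).2 _ (hb e he).1
  have h2 : dot (c e) u ≤ dot (b e) u := (hb e he).2 _ (hc e he).1
  have hw := (H.w_pos e he).le
  set a := dot (b e) u
  set a' := dot (c e) u'
  set t := dot (b e) u'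
  set s := dot (c e) u
  have hinner : 0 ≤ a * (a - t) - a' * (s - a') := by nlinarith [sq_nonneg (a - a')]
  calc (0:ℝ) ≤ H.w e * (a * (a - t) - a' * (s - a')) := mul_nonneg hw hinner
    _ = H.w e * a * (a - t) - H.w e * a' * (s - a') := by ring

lemma inn_eq_dot (H : Hypergraph V) (p q : V → ℝ) : inn H p q = dot p (Dinv H q) := by
  unfold inn dot Dinv
  exact Finset.sum_congr rfl fun x _ => (mul_div_assoc _ _ _)

lemma Dinv_sub (H : Hypergraph V) (a b : V → ℝ) :
    Dinv H (a - b) = Dinv H a - Dinv H b := by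
  funext x; simp [Dinv, sub_div]

lemma NL_mono {g1 g2 h1 h2 : V → ℝ} (hh1 : h1 ∈ NL H g1) (hh2 : h2 ∈ NL H g2) :
    0 ≤ inn H (h1 - h2) (g1 - g2) := by
  rw [inn_eq_dot, Dinv_sub]
  exact Lap_mono hh1 hh2


-- ### Norm bound for Laplacian values at Lipschitz functions

lemma gdist_le_one {e : Finset V} (he : e ∈ H.E) {x y : V} (hx : x ∈ e) (hy : y ∈ e) :
    gdist H x y ≤ 1 := by
  have hchain : chainProp H x y 1 := by
    refine ⟨fun i => if i = 0 then x else y, by simp, by simp, fun i hi => ?_⟩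
    have : i = 0 := Nat.lt_one_iff.mp hi
    subst this
    simpa using ⟨e, he, hx, hy⟩
  have h1 : hdistN H x y ≤ 1 := Nat.sInf_le hchain
  unfold gdist
  exact_mod_cast h1

lemma inn_delta_sub (H : Hypergraph V) (f : V → ℝ) (x y : V) :
    inn H f (delta x - delta y) = Dinv H f x - Dinv H f y := by
  rw [inn_comm, inn_eq_dot, dot_delta_sub]

lemma mx_Dinv_le_one {f : V → ℝ} (hf : f ∈ Lip1 H) {e : Finset V} (he : e ∈ H.E) :
    mx e (Dinv H f) ≤ 1 := by
  refine mx_le (H.e_nonempty e he) fun x hx y hy => ?_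
  rw [← inn_delta_sub]
  exact le_trans (hf x y) (gdist_le_one he hx hy)

lemma sum_w_edge (φ : V → ℝ) :
    ∑ e ∈ H.E, H.w e * (∑ z ∈ e, φ z) = ∑ z, deg H z * φ z := by
  have h1 : ∀ e ∈ H.E, H.w e * (∑ z ∈ e, φ z) = ∑ z, if z ∈ e then H.w e * φ z else 0 := by
    intro e _
    rw [Finset.sum_ite_mem, Finset.univ_inter, Finset.mul_sum]
  rw [Finset.sum_congr rfl h1, Finset.sum_comm]
  refine Finset.sum_congr rfl fun z _ => ?_
  unfold deg
  rw [Finset.sum_mul]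
  exact Finset.sum_congr rfl fun e _ => by rw [ite_mul, zero_mul]

lemma sum_w_le_vol (H : Hypergraph V) : ∑ e ∈ H.E, H.w e ≤ vol H := by
  calc ∑ e ∈ H.E, H.w e ≤ ∑ e ∈ H.E, H.w e * (∑ z ∈ e, (1:ℝ)) := by
        refine Finset.sum_le_sum fun e he => ?_
        refine le_mul_of_one_le_right (H.w_pos e he).le ?_
        rw [Finset.sum_const, nsmul_eq_mul, mul_one]
        exact_mod_cast Finset.card_pos.2 (H.e_nonempty e he)
    _ = ∑ z, deg H z * 1 := sum_w_edge _
    _ = vol H := by simp [vol]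

lemma NL_norm_le (hdeg : ∀ x : V, 0 < deg H x) {f h : V → ℝ} (hf : f ∈ Lip1 H)
    (hh : h ∈ NL H f) : nrm H h ≤ Real.sqrt 2 * Real.sqrt (vol H) := by
  obtain ⟨b, hb, hform⟩ := Lap_form hh
  set u := Dinv H f with hu
  set k := Dinv H h with hk
  have hA : inn H h h = ∑ e ∈ H.E, (H.w e * mx e u) * dot (b e) k := by
    have h1 : dot h k = ∑ e ∈ H.E, dot ((H.w e * mx e u) • b e) k := by
      conv_lhs => rw [hform]
      exact dot_sum_left _ _ _
    rw [inn_eq_dot, ← hk, h1]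
    exact Finset.sum_congr rfl fun e he => dot_smul_left _ _ _
  have hwm : ∀ e ∈ H.E, 0 ≤ H.w e * mx e u := fun e he =>
    mul_nonneg (H.w_pos e he).le (mx_nonneg (H.e_nonempty e he) u)
  have hstep : inn H h h ≤ ∑ e ∈ H.E, (H.w e * mx e u) * mx e k := by
    rw [hA]
    exact Finset.sum_le_sum fun e he =>
      mul_le_mul_of_nonneg_left (dot_le_mx_of_mem_Bp (hb e he).1 k) (hwm e he)
  have hCS : ∑ e ∈ H.E, (H.w e * mx e u) * mx e k ≤
      Real.sqrt (∑ e ∈ H.E, H.w e * (mx e u)^2) *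
      Real.sqrt (∑ e ∈ H.E, H.w e * (mx e k)^2) := by
    have h1 : ∀ e ∈ H.E, (H.w e * mx e u) * mx e k
        = (Real.sqrt (H.w e) * mx e u) * (Real.sqrt (H.w e) * mx e k) := by
      intro e he
      have hws : Real.sqrt (H.w e) * Real.sqrt (H.w e) = H.w e :=
        Real.mul_self_sqrt (H.w_pos e he).le
      rw [mul_mul_mul_comm, hws, mul_assoc]
    have h2 : ∀ e ∈ H.E, (Real.sqrt (H.w e) * mx e u)^2 = H.w e * (mx e u)^2 := by
      intro e he
      rw [mul_pow, Real.sq_sqrt (H.w_pos e he).le]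
    have h3 : ∀ e ∈ H.E, (Real.sqrt (H.w e) * mx e k)^2 = H.w e * (mx e k)^2 := by
      intro e he
      rw [mul_pow, Real.sq_sqrt (H.w_pos e he).le]
    calc ∑ e ∈ H.E, (H.w e * mx e u) * mx e k
        = ∑ e ∈ H.E, (Real.sqrt (H.w e) * mx e u) * (Real.sqrt (H.w e) * mx e k) :=
          Finset.sum_congr rfl h1
      _ ≤ Real.sqrt (∑ e ∈ H.E, (Real.sqrt (H.w e) * mx e u)^2) *
          Real.sqrt (∑ e ∈ H.E, (Real.sqrt (H.w e) * mx e k)^2) :=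
          Real.sum_mul_le_sqrt_mul_sqrt _ _ _
      _ = Real.sqrt (∑ e ∈ H.E, H.w e * (mx e u)^2) *
          Real.sqrt (∑ e ∈ H.E, H.w e * (mx e k)^2) := by
          rw [Finset.sum_congr rfl h2, Finset.sum_congr rfl h3]
  have hB1 : ∑ e ∈ H.E, H.w e * (mx e u)^2 ≤ vol H := by
    refine le_trans (Finset.sum_le_sum fun e he => ?_) (sum_w_le_vol H)
    have h0 : 0 ≤ mx e u := mx_nonneg (H.e_nonempty e he) u
    have h1 : mx e u ≤ 1 := mx_Dinv_le_one hf he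
    have h2 : mx e u ^ 2 ≤ 1 := by nlinarith
    calc H.w e * mx e u ^ 2 ≤ H.w e * 1 :=
          mul_le_mul_of_nonneg_left h2 (H.w_pos e he).le
      _ = H.w e := mul_one _
  have hB2 : ∑ e ∈ H.E, H.w e * (mx e k)^2 ≤ 2 * inn H h h := by
    have hper : ∀ e ∈ H.E, (mx e k)^2 ≤ 2 * ∑ z ∈ e, (k z)^2 := by
      intro e he
      obtain ⟨x, hx, y, hy, hv⟩ := exists_mx_pair (H.e_nonempty e he) k
      have hsum : 0 ≤ ∑ z ∈ e, (k z)^2 := Finset.sum_nonneg fun z _ => sq_nonneg _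
      by_cases hxy : x = y
      · rw [hv, hxy, sub_self]
        simp only [ne_eq, OfNat.ofNat_ne_zero, not_false_eq_true, zero_pow]
        linarith
      · have hpair : (k x)^2 + (k y)^2 ≤ ∑ z ∈ e, (k z)^2 := by
          have hsub : ({x, y} : Finset V) ⊆ e := by
            intro z hz
            rcases Finset.mem_insert.mp hz with rfl | hz
            · exact hx
            · rw [Finset.mem_singleton] at hz; subst hz; exact hy
          calc (k x)^2 + (k y)^2 = ∑ z ∈ ({x, y} : Finset V), (k z)^2 := by
                rw [Finset.sum_pair hxy]
            _ ≤ ∑ z ∈ e, (k z)^2 :=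
                Finset.sum_le_sum_of_subset_of_nonneg hsub fun z _ _ => sq_nonneg _
        rw [hv]
        nlinarith [sq_nonneg (k x + k y)]
    calc ∑ e ∈ H.E, H.w e * (mx e k)^2
        ≤ ∑ e ∈ H.E, H.w e * (2 * ∑ z ∈ e, (k z)^2) := by
          refine Finset.sum_le_sum fun e he => ?_
          exact mul_le_mul_of_nonneg_left (hper e he) (H.w_pos e he).le
      _ = 2 * ∑ e ∈ H.E, H.w e * (∑ z ∈ e, (k z)^2) := by
          rw [Finset.mul_sum]; exact Finset.sum_congr rfl fun e _ => by ring
      _ = 2 * ∑ z, deg H z * (k z)^2 := by rw [sum_w_edge]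
      _ = 2 * inn H h h := by
          congr 1
          unfold inn
          refine Finset.sum_congr rfl fun z _ => ?_
          have hd : deg H z ≠ 0 := (hdeg z).ne'
          rw [hk]
          unfold Dinv
          rw [div_pow]
          field_simp
  have hfinal : inn H h h ≤ Real.sqrt (vol H) * (Real.sqrt 2 * nrm H h) := by
    have hs1 : Real.sqrt (∑ e ∈ H.E, H.w e * (mx e u)^2) ≤ Real.sqrt (vol H) :=
      Real.sqrt_le_sqrt hB1
    have hs2 : Real.sqrt (∑ e ∈ H.E, H.w e * (mx e k)^2) ≤ Real.sqrt 2 * nrm H h := by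
      refine le_trans (Real.sqrt_le_sqrt hB2) ?_
      rw [Real.sqrt_mul (by norm_num : (0:ℝ) ≤ 2)]
      rfl
    calc inn H h h ≤ _ := le_trans hstep hCS
      _ ≤ Real.sqrt (vol H) * (Real.sqrt 2 * nrm H h) := by
        apply mul_le_mul hs1 hs2 (Real.sqrt_nonneg _)
        exact Real.sqrt_nonneg _
  rcases eq_or_lt_of_le (nrm_nonneg (H := H) h) with h0 | h0
  · rw [← h0]
    positivity
  · have hsq : nrm H h * nrm H h = inn H h h := by
      have := nrm_sq hdeg h; nlinarith [this]
    have : nrm H h * nrm H h ≤ (Real.sqrt 2 * Real.sqrt (vol H)) * nrm H h := by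
      rw [hsq]; calc inn H h h ≤ _ := hfinal
        _ = (Real.sqrt 2 * Real.sqrt (vol H)) * nrm H h := by ring
    exact le_of_mul_le_mul_right this h0

-- ### Existence of the resolvent: the energy functional and its minimizer

/-- The strongly convex energy whose minimizer solves the resolvent equation. -/
def psiF (H : Hypergraph V) (l : ℝ) (f : V → ℝ) (u : V → ℝ) : ℝ :=
  l / 2 * (∑ e ∈ H.E, H.w e * (mx e u)^2) + (1/2) * (∑ x, deg H x * (u x)^2)
    - ∑ x, f x * u x

lemma mx_zero {e : Finset V} (he : e.Nonempty) : mx e (0 : V → ℝ) = 0 := by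
  rw [mx_eq he]
  have : (fun p : V × V => (0 : V → ℝ) p.1 - (0 : V → ℝ) p.2) = fun _ => (0:ℝ) := by
    funext p; simp
  rw [this, Finset.sup'_const]

lemma mx_continuous {e : Finset V} (he : e.Nonempty) :
    Continuous fun u : V → ℝ => mx e u := by
  have hrw : (fun u : V → ℝ => mx e u)
      = fun u : V → ℝ => (e ×ˢ e).sup' (he.product he) (fun p => u p.1 - u p.2) := by
    funext u; exact mx_eq he u
  rw [hrw]
  exact Continuous.finset_sup'_apply (he.product he)
    (fun p _ => (continuous_apply p.1).sub (continuous_apply p.2))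

lemma psiF_zero (H : Hypergraph V) (l : ℝ) (f : V → ℝ) : psiF H l f 0 = 0 := by
  unfold psiF
  have h1 : ∀ e ∈ H.E, H.w e * (mx e (0:V→ℝ))^2 = 0 := by
    intro e he; rw [mx_zero (H.e_nonempty e he)]; ring
  rw [Finset.sum_congr rfl h1]
  simp

lemma psiF_exists_min [Nonempty V] (H : Hypergraph V) (hdeg : ∀ x : V, 0 < deg H x)
    {l : ℝ} (hl : 0 < l) (f : V → ℝ) :
    ∃ u0 : V → ℝ, ∀ u : V → ℝ, psiF H l f u0 ≤ psiF H l f u := by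
  classical
  have hψ : Continuous (psiF H l f) := by
    have hc1 : Continuous fun u : V → ℝ => ∑ e ∈ H.E, H.w e * (mx e u)^2 :=
      continuous_finset_sum _ fun e he =>
        continuous_const.mul ((mx_continuous (H.e_nonempty e he)).pow 2)
    have hc2 : Continuous fun u : V → ℝ => ∑ x, deg H x * (u x)^2 :=
      continuous_finset_sum _ fun x _ => continuous_const.mul ((continuous_apply x).pow 2)
    have hc3 : Continuous fun u : V → ℝ => ∑ x, f x * u x :=
      continuous_finset_sum _ fun x _ => continuous_const.mul (continuous_apply x)
    exact ((continuous_const.mul hc1).add (continuous_const.mul hc2)).sub hc3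
  -- constants
  set c : ℝ := Finset.univ.inf' Finset.univ_nonempty (deg H) with hc_def
  have hc : 0 < c := by
    obtain ⟨x, _, hx⟩ := Finset.exists_mem_eq_inf' (Finset.univ_nonempty) (deg H)
    rw [hc_def, hx]; exact hdeg x
  set F : ℝ := ∑ x, |f x| with hF_def
  have hF : 0 ≤ F := Finset.sum_nonneg fun x _ => abs_nonneg _
  set R : ℝ := 2 * F / c + 1 with hR_def
  have hR : 0 < R := by positivity
  set K : Set (V → ℝ) := Set.pi Set.univ (fun _ : V => Set.Icc (-R) R) with hK_def
  have hKc : IsCompact K := isCompact_univ_pi fun _ => isCompact_Icc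
  have hK0 : (0 : V → ℝ) ∈ K := by
    intro x _; constructor <;> simp <;> linarith
  obtain ⟨u0, hu0K, hu0min⟩ := hKc.exists_isMinOn ⟨0, hK0⟩ hψ.continuousOn
  refine ⟨u0, fun u => ?_⟩
  by_cases hu : u ∈ K
  · exact hu0min hu
  · -- u is far away; ψ u > 0 = ψ 0 ≥ ψ u0
    have hu0le : psiF H l f u0 ≤ 0 := by
      have h00 := hu0min hK0
      simp only [Set.mem_setOf_eq] at h00
      rwa [psiF_zero] at h00
    -- the coordinate of largest absolute value
    obtain ⟨x0, _, hx0⟩ := Finset.exists_mem_eq_sup' (Finset.univ_nonempty (α := V))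
      (fun z => |u z|)
    set A : ℝ := |u x0| with hA_def
    have hAmax : ∀ z : V, |u z| ≤ A := by
      intro z
      calc |u z| ≤ Finset.univ.sup' Finset.univ_nonempty (fun z => |u z|) :=
            Finset.le_sup' (fun z => |u z|) (Finset.mem_univ z)
        _ = A := hx0
    have hAR : R < A := by
      rw [hK_def] at hu
      simp only [Set.mem_pi, Set.mem_univ, forall_true_left, Set.mem_Icc] at hu
      push_neg at hu
      obtain ⟨z, hz⟩ := hu
      rcases lt_or_ge (u z) (-R) with h | h
      · calc R < -(u z) := by linarith
          _ ≤ |u z| := neg_le_abs _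
          _ ≤ A := hAmax z
      · calc R < u z := hz h
          _ ≤ |u z| := le_abs_self _
          _ ≤ A := hAmax z
    have hApos : 0 < A := lt_trans hR hAR
    -- lower bounds on the pieces
    have hphi : 0 ≤ ∑ e ∈ H.E, H.w e * (mx e u)^2 :=
      Finset.sum_nonneg fun e he => mul_nonneg (H.w_pos e he).le (sq_nonneg _)
    have hquad : c * A^2 ≤ ∑ z, deg H z * (u z)^2 := by
      have h1 : c * A^2 ≤ deg H x0 * (u x0)^2 := by
        have h2 : c ≤ deg H x0 := Finset.inf'_le _ (Finset.mem_univ x0)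
        have h3 : A^2 = (u x0)^2 := by rw [hA_def, sq_abs]
        rw [h3]
        exact mul_le_mul_of_nonneg_right h2 (sq_nonneg _)
      calc c * A^2 ≤ deg H x0 * (u x0)^2 := h1
        _ ≤ ∑ z, deg H z * (u z)^2 :=
          Finset.single_le_sum (fun z _ => mul_nonneg (hdeg z).le (sq_nonneg _))
            (Finset.mem_univ x0)
    have hlin : ∑ z, f z * u z ≤ F * A := by
      rw [hF_def, Finset.sum_mul]
      refine Finset.sum_le_sum fun z _ => ?_
      calc f z * u z ≤ |f z * u z| := le_abs_self _
        _ = |f z| * |u z| := abs_mul _ _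
        _ ≤ |f z| * A := mul_le_mul_of_nonneg_left (hAmax z) (abs_nonneg _)
    have hcR : c * R = 2 * F + c := by
      rw [hR_def]; field_simp
    have hpos : 0 < psiF H l f u := by
      unfold psiF
      have h1 : 0 ≤ l / 2 * (∑ e ∈ H.E, H.w e * (mx e u)^2) := by positivity
      have hcA : 2 * F + c < c * A := by
        rw [← hcR]; exact (mul_lt_mul_iff_right₀ hc).2 hAR
      nlinarith [hquad, hlin, hApos, hc, hF]
    linarith

lemma resolvent_exists [Nonempty V] (H : Hypergraph V) (hdeg : ∀ x : V, 0 < deg H x)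
    {l : ℝ} (hl : 0 < l) (f : V → ℝ) :
    ∃ g : V → ℝ, ∃ h ∈ NL H g, f = g + l • h := by
  classical
  obtain ⟨u0, hmin⟩ := psiF_exists_min H hdeg hl f
  set base : V → ℝ := fun x => deg H x * u0 x - f x with hbase
  set ActS : Set (Finset V → V × V) :=
    {σ | ∀ e ∈ H.E, (σ e).1 ∈ e ∧ (σ e).2 ∈ e ∧ u0 (σ e).1 - u0 (σ e).2 = mx e u0}
    with hActS
  set P : (Finset V → V × V) → (V → ℝ) := fun σ =>
    base + l • ∑ e ∈ H.E, (H.w e * mx e u0) • (delta (σ e).1 - delta (σ e).2) with hP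
  have claim0 : (0 : V → ℝ) ∈ convexHull ℝ (P '' ActS) := by
    by_contra hnot
    have hfin : (P '' ActS).Finite := (Set.toFinite ActS).image P
    obtain ⟨φ, cst, hlt, hgt⟩ := geometric_hahn_banach_closed_point
      (convex_convexHull ℝ _) (hfin.isCompact_convexHull (𝕜 := ℝ)).isClosed hnot
    have hc0 : cst < 0 := by simpa using hgt
    set v : V → ℝ := fun z => φ (delta z) with hv
    have hφdot : ∀ a : V → ℝ, φ a = dot a v := by
      intro a
      have ha : a = ∑ z : V, a z • delta z := by
        funext t
        rw [Finset.sum_apply]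
        have h1 : ∀ z : V, (a z • delta z) t = if t = z then a t else 0 := by
          intro z
          by_cases h : t = z
          · subst h; simp [delta]
          · simp [delta, h]
        rw [Finset.sum_congr rfl fun z _ => h1 z, Finset.sum_ite_eq Finset.univ t
          (fun _ => a t)]
        simp
      conv_lhs => rw [ha]
      rw [map_sum]
      unfold dot
      refine Finset.sum_congr rfl fun z _ => ?_
      rw [map_smul, hv, smul_eq_mul]
    -- select, for each edge, an active pair maximizing the v-difference
    have hsel : ∀ e ∈ H.E, ∃ p : V × V, p.1 ∈ e ∧ p.2 ∈ e ∧
        u0 p.1 - u0 p.2 = mx e u0 ∧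
        ∀ q : V × V, q.1 ∈ e → q.2 ∈ e → u0 q.1 - u0 q.2 = mx e u0 →
          v q.1 - v q.2 ≤ v p.1 - v p.2 := by
      intro e he
      set A := (e ×ˢ e).filter (fun p : V × V => u0 p.1 - u0 p.2 = mx e u0) with hA
      have hAne : A.Nonempty := by
        obtain ⟨x, hx, y, hy, hval⟩ := exists_mx_pair (H.e_nonempty e he) u0
        exact ⟨(x, y), Finset.mem_filter.2 ⟨Finset.mk_mem_product hx hy, hval.symm⟩⟩
      obtain ⟨p, hpA, hval⟩ := Finset.exists_mem_eq_sup' hAne (fun p : V × V => v p.1 - v p.2)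
      have hp := Finset.mem_filter.1 hpA
      have hp1 := Finset.mem_product.1 hp.1
      refine ⟨p, hp1.1, hp1.2, hp.2, fun q h1 h2 h3 => ?_⟩
      calc v q.1 - v q.2
          ≤ A.sup' hAne (fun p : V × V => v p.1 - v p.2) :=
            Finset.le_sup' (fun p : V × V => v p.1 - v p.2)
              (Finset.mem_filter.2 ⟨Finset.mk_mem_product h1 h2, h3⟩)
        _ = v p.1 - v p.2 := hval
    set σs : Finset V → V × V := fun e =>
      if he : e ∈ H.E then (hsel e he).choose
      else (Classical.arbitrary V, Classical.arbitrary V) with hσs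
    have hσprop : ∀ e (he : e ∈ H.E), (σs e).1 ∈ e ∧ (σs e).2 ∈ e ∧
        u0 (σs e).1 - u0 (σs e).2 = mx e u0 ∧
        ∀ q : V × V, q.1 ∈ e → q.2 ∈ e → u0 q.1 - u0 q.2 = mx e u0 →
          v q.1 - v q.2 ≤ v (σs e).1 - v (σs e).2 := by
      intro e he
      simp only [hσs, dif_pos he]
      exact (hsel e he).choose_spec
    have hσsA : σs ∈ ActS := by
      intro e he
      obtain ⟨h1, h2, h3, _⟩ := hσprop e he
      exact ⟨h1, h2, h3⟩
    have hPneg : dot (P σs) v < 0 := by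
      rw [← hφdot]
      exact lt_trans (hlt _ (subset_convexHull ℝ _ ⟨σs, hσsA, rfl⟩)) hc0
    set Af : Finset V → ℝ := fun e => v (σs e).1 - v (σs e).2 with hAf
    -- per-edge time thresholds
    have hedge : ∀ e ∈ H.E, ∃ te : ℝ, 0 < te ∧ ∀ t : ℝ, 0 < t → t ≤ te →
        mx e (u0 + t • v) ≤ mx e u0 + t * Af e := by
      intro e he
      have hne := H.e_nonempty e he
      set N := (e ×ˢ e).filter (fun p : V × V => ¬ (u0 p.1 - u0 p.2 = mx e u0)) with hN
      by_cases hNne : N.Nonempty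
      · set δ := N.inf' hNne (fun p : V × V => mx e u0 - (u0 p.1 - u0 p.2)) with hδ
        have hδpos : 0 < δ := by
          rw [hδ, Finset.lt_inf'_iff]
          intro p hp
          obtain ⟨hpe, hpne⟩ := Finset.mem_filter.1 hp
          obtain ⟨h1, h2⟩ := Finset.mem_product.1 hpe
          have hle := le_mx h1 h2 u0
          have : u0 p.1 - u0 p.2 < mx e u0 := lt_of_le_of_ne hle hpne
          linarith
        set Vb := (e ×ˢ e).sup' (hne.product hne) (fun p : V × V => v p.1 - v p.2) with hVb
        have hCge : Af e ≤ Vb := by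
          rw [hVb]
          exact Finset.le_sup' (fun p : V × V => v p.1 - v p.2)
            (Finset.mk_mem_product (hσprop e he).1 (hσprop e he).2.1)
        refine ⟨δ / (Vb - Af e + 1), div_pos hδpos (by linarith), fun t ht hte => ?_⟩
        refine mx_le hne fun x hx y hy => ?_
        simp only [Pi.add_apply, Pi.smul_apply, smul_eq_mul]
        by_cases hact : u0 x - u0 y = mx e u0
        · have hvle : v x - v y ≤ Af e := (hσprop e he).2.2.2 (x, y) hx hy hact
          nlinarith [mul_le_mul_of_nonneg_left hvle ht.le]
        · have hmem : (x, y) ∈ N :=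
            Finset.mem_filter.2 ⟨Finset.mk_mem_product hx hy, hact⟩
          have hgap : δ ≤ mx e u0 - (u0 x - u0 y) :=
            Finset.inf'_le (fun p : V × V => mx e u0 - (u0 p.1 - u0 p.2)) hmem
          have hvb : v x - v y ≤ Vb := by
            rw [hVb]
            exact Finset.le_sup' (fun p : V × V => v p.1 - v p.2)
              (Finset.mk_mem_product hx hy)
          have htC : t * (Vb - Af e + 1) ≤ δ := by
            rw [← le_div_iff₀ (by linarith : (0:ℝ) < Vb - Af e + 1)]
            exact hte
          nlinarith [mul_le_mul_of_nonneg_left hvb ht.le, ht.le]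
      · refine ⟨1, one_pos, fun t ht hte => ?_⟩
        refine mx_le hne fun x hx y hy => ?_
        simp only [Pi.add_apply, Pi.smul_apply, smul_eq_mul]
        have hact : u0 x - u0 y = mx e u0 := by
          by_contra hact
          exact hNne ⟨(x, y), Finset.mem_filter.2 ⟨Finset.mk_mem_product hx hy, hact⟩⟩
        have hvle : v x - v y ≤ Af e := (hσprop e he).2.2.2 (x, y) hx hy hact
        nlinarith [mul_le_mul_of_nonneg_left hvle ht.le]
    choose te hte1 hte2 using hedge
    -- global threshold
    set t1 : ℝ := if hE : H.E.Nonempty then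
        min 1 (H.E.attach.inf' (Finset.attach_nonempty_iff.2 hE) (fun e => te e.1 e.2))
      else 1 with ht1
    have ht1pos : 0 < t1 := by
      rw [ht1]
      split
      · next hE =>
          exact lt_min one_pos (Finset.lt_inf'_iff _ |>.2 fun i _ => hte1 i.1 i.2)
      · exact one_pos
    have ht1le : ∀ e (he : e ∈ H.E), t1 ≤ te e he := by
      intro e he
      rw [ht1, dif_pos ⟨e, he⟩]
      refine le_trans (min_le_right _ _) ?_
      exact Finset.inf'_le (fun i => te i.1 i.2) (Finset.mem_attach _ ⟨e, he⟩)
    -- abbreviations for the sums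
    set X : ℝ := ∑ e ∈ H.E, H.w e * mx e u0 * Af e with hX
    set Y : ℝ := ∑ e ∈ H.E, H.w e * (Af e)^2 with hY
    set Zq : ℝ := ∑ x, deg H x * u0 x * v x with hZq
    set Zv : ℝ := ∑ x, deg H x * (v x)^2 with hZv
    set Zf : ℝ := ∑ x, f x * v x with hZf
    have hB1eq : dot (P σs) v = l * X + (Zq - Zf) := by
      rw [hP]
      simp only []
      rw [dot_add_left, dot_smul_left, dot_sum_left]
      have h1 : ∀ e ∈ H.E, dot ((H.w e * mx e u0) • (delta (σs e).1 - delta (σs e).2)) v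
          = H.w e * mx e u0 * Af e := by
        intro e he
        rw [dot_smul_left, dot_delta_sub]
      rw [Finset.sum_congr rfl h1, ← hX]
      have h2 : dot base v = Zq - Zf := by
        rw [hbase]
        unfold dot
        rw [hZq, hZf, ← Finset.sum_sub_distrib]
        exact Finset.sum_congr rfl fun x _ => by ring
      rw [h2]
      ring
    set B1 : ℝ := l * X + (Zq - Zf) with hB1
    set B2 : ℝ := l / 2 * Y + (1/2) * Zv with hB2
    have hB1neg : B1 < 0 := hB1eq ▸ hPneg
    have hB2nn : 0 ≤ B2 := by
      rw [hB2, hY, hZv]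
      have hY0 : 0 ≤ ∑ e ∈ H.E, H.w e * (Af e)^2 :=
        Finset.sum_nonneg fun e he => mul_nonneg (H.w_pos e he).le (sq_nonneg _)
      have hZv0 : 0 ≤ ∑ x, deg H x * (v x)^2 :=
        Finset.sum_nonneg fun x _ => mul_nonneg (hdeg x).le (sq_nonneg _)
      positivity
    set t : ℝ := min t1 ((-B1) / (B2 + 1)) with htdef
    have htpos : 0 < t :=
      lt_min ht1pos (div_pos (neg_pos.2 hB1neg) (by linarith))
    have hψle : psiF H l f (u0 + t • v) ≤ psiF H l f u0 + t * B1 + t^2 * B2 := by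
      have hS1 : ∑ e ∈ H.E, H.w e * (mx e (u0 + t • v))^2
          ≤ (∑ e ∈ H.E, H.w e * (mx e u0)^2) + t * (2 * X) + t^2 * Y := by
        have hper : ∀ e ∈ H.E, H.w e * (mx e (u0 + t • v))^2
            ≤ H.w e * (mx e u0)^2 + t * (2 * (H.w e * mx e u0 * Af e))
              + t^2 * (H.w e * (Af e)^2) := by
          intro e he
          have h1 : mx e (u0 + t • v) ≤ mx e u0 + t * Af e :=
            hte2 e he t htpos (le_trans (min_le_left _ _) (ht1le e he))
          have h0 : 0 ≤ mx e (u0 + t • v) := mx_nonneg (H.e_nonempty e he) _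
          have hsq : (mx e (u0 + t • v))^2 ≤ (mx e u0 + t * Af e)^2 := by nlinarith
          calc H.w e * (mx e (u0 + t • v))^2
              ≤ H.w e * (mx e u0 + t * Af e)^2 :=
                mul_le_mul_of_nonneg_left hsq (H.w_pos e he).le
            _ = H.w e * (mx e u0)^2 + t * (2 * (H.w e * mx e u0 * Af e))
                + t^2 * (H.w e * (Af e)^2) := by ring
        calc ∑ e ∈ H.E, H.w e * (mx e (u0 + t • v))^2
            ≤ ∑ e ∈ H.E, (H.w e * (mx e u0)^2 + t * (2 * (H.w e * mx e u0 * Af e))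
                + t^2 * (H.w e * (Af e)^2)) := Finset.sum_le_sum hper
          _ = (∑ e ∈ H.E, H.w e * (mx e u0)^2) + t * (2 * X) + t^2 * Y := by
              rw [Finset.sum_add_distrib, Finset.sum_add_distrib, hX, hY,
                Finset.mul_sum, Finset.mul_sum, Finset.mul_sum]
      have hQ : ∑ x, deg H x * ((u0 + t • v) x)^2
          = (∑ x, deg H x * (u0 x)^2) + t * (2 * Zq) + t^2 * Zv := by
        rw [hZq, hZv, Finset.mul_sum, Finset.mul_sum, Finset.mul_sum,
          ← Finset.sum_add_distrib, ← Finset.sum_add_distrib]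
        refine Finset.sum_congr rfl fun x _ => ?_
        simp only [Pi.add_apply, Pi.smul_apply, smul_eq_mul]
        ring
      have hL : ∑ x, f x * ((u0 + t • v) x)
          = (∑ x, f x * u0 x) + t * Zf := by
        rw [hZf, Finset.mul_sum, ← Finset.sum_add_distrib]
        refine Finset.sum_congr rfl fun x _ => ?_
        simp only [Pi.add_apply, Pi.smul_apply, smul_eq_mul]
        ring
      unfold psiF
      rw [hQ, hL]
      have hmul := mul_le_mul_of_nonneg_left hS1 (by positivity : (0:ℝ) ≤ l / 2)
      rw [hB1, hB2]
      nlinarith [hmul]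
    have htB : t * B1 + t^2 * B2 < 0 := by
      have hd : t ≤ (-B1) / (B2 + 1) := min_le_right _ _
      have h1 : t * (B2 + 1) ≤ -B1 := by
        rw [← le_div_iff₀ (by linarith : (0:ℝ) < B2 + 1)]
        exact hd
      nlinarith [htpos]
    have := hmin (u0 + t • v)
    linarith
  -- unpack the convex combination witnessing claim0
  rw [convexHull_eq] at claim0
  obtain ⟨ι, tf, wt, zf, hw0, hw1, hzS, hcm⟩ := claim0
  rw [Finset.centerMass_eq_of_sum_1 _ _ hw1] at hcm
  simp only [Set.mem_image] at hzS
  choose σc hσc1 hσc2 using hzS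
  set bb : Finset V → (V → ℝ) := fun e =>
    ∑ i ∈ tf.attach, wt i.1 • (delta ((σc i.1 i.2) e).1 - delta ((σc i.1 i.2) e).2) with hbb
  have hwsum : ∑ i ∈ tf.attach, wt i.1 = 1 := by
    rw [Finset.sum_attach]; exact hw1
  have hbbx : ∀ (e : Finset V) (x : V), bb e x
      = ∑ i ∈ tf.attach,
          wt i.1 * (delta ((σc i.1 i.2) e).1 x - delta ((σc i.1 i.2) e).2 x) := by
    intro e x
    rw [hbb]
    simp only []
    rw [Finset.sum_apply]
    exact Finset.sum_congr rfl fun i _ => by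
      simp [Pi.smul_apply, Pi.sub_apply, smul_eq_mul]
  have hPx : ∀ (σ : Finset V → V × V) (x : V), P σ x
      = base x + l * ∑ e ∈ H.E,
          (H.w e * mx e u0) * (delta (σ e).1 x - delta (σ e).2 x) := by
    intro σ x
    rw [hP]
    simp only [Pi.add_apply, Pi.smul_apply, smul_eq_mul]
    congr 1
    rw [Finset.sum_apply]
    congr 1
  have hpt : ∀ x : V, base x + l * (∑ e ∈ H.E, (H.w e * mx e u0) * (bb e x)) = 0 := by
    intro x
    have h0 := congrFun hcm x
    rw [Finset.sum_apply] at h0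
    simp only [Pi.smul_apply, smul_eq_mul, Pi.zero_apply] at h0
    rw [← Finset.sum_attach tf (fun i => wt i * zf i x)] at h0
    have h1 : ∀ i ∈ tf.attach, wt i.1 * zf i.1 x
        = wt i.1 * base x + l * ∑ e ∈ H.E,
            (H.w e * mx e u0) *
              (wt i.1 * (delta ((σc i.1 i.2) e).1 x - delta ((σc i.1 i.2) e).2 x)) := by
      intro i _
      rw [← hσc2 i.1 i.2, hPx, mul_add, mul_left_comm (wt i.1) l, Finset.mul_sum]
      congr 1
      congr 1
      exact Finset.sum_congr rfl fun e _ => by ring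
    rw [Finset.sum_congr rfl h1, Finset.sum_add_distrib, ← Finset.sum_mul, hwsum, one_mul,
      ← Finset.mul_sum, Finset.sum_comm] at h0
    have h2 : ∀ e ∈ H.E, (∑ i ∈ tf.attach, (H.w e * mx e u0) *
        (wt i.1 * (delta ((σc i.1 i.2) e).1 x - delta ((σc i.1 i.2) e).2 x)))
        = (H.w e * mx e u0) * bb e x := by
      intro e _
      rw [hbbx, Finset.mul_sum]
    rw [Finset.sum_congr rfl h2] at h0
    exact h0
  -- assemble the solution
  have hactive : ∀ (i : ι) (hi : i ∈ tf), ∀ e ∈ H.E,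
      ((σc i hi) e).1 ∈ e ∧ ((σc i hi) e).2 ∈ e ∧
        u0 ((σc i hi) e).1 - u0 ((σc i hi) e).2 = mx e u0 := by
    intro i hi
    have := hσc1 i hi
    rw [hActS, Set.mem_setOf_eq] at this
    exact this
  have hdotbb : ∀ e ∈ H.E, dot (bb e) u0 = mx e u0 := by
    intro e he
    rw [hbb]
    simp only []
    rw [dot_sum_left]
    have h1 : ∀ i ∈ tf.attach,
        dot (wt i.1 • (delta ((σc i.1 i.2) e).1 - delta ((σc i.1 i.2) e).2)) u0
          = wt i.1 * mx e u0 := by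
      intro i _
      rw [dot_smul_left, dot_delta_sub, (hactive i.1 i.2 e he).2.2]
    rw [Finset.sum_congr rfl h1, ← Finset.sum_mul, hwsum, one_mul]
  have hbbBp : ∀ e ∈ H.E, bb e ∈ Bp e := by
    intro e he
    rw [hbb]
    simp only []
    refine Convex.sum_mem (convex_convexHull ℝ _) (fun i _ => hw0 i.1 i.2) hwsum
      (fun i _ => ?_)
    exact gen_mem_Bp (hactive i.1 i.2 e he).1 (hactive i.1 i.2 e he).2.1
  refine ⟨fun x => deg H x * u0 x, ∑ e ∈ H.E, (H.w e * mx e u0) • bb e, ?_, ?_⟩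
  · have hDinv : Dinv H (fun x => deg H x * u0 x) = u0 := by
      funext x
      unfold Dinv
      show deg H x * u0 x / deg H x = u0 x
      rw [mul_comm, mul_div_assoc, div_self (hdeg x).ne', mul_one]
    show _ ∈ Lap H (Dinv H _)
    rw [hDinv]
    refine ⟨bb, fun e he => ⟨hbbBp e he, fun b' hb' => ?_⟩, ?_⟩
    · rw [hdotbb e he]
      exact dot_le_mx_of_mem_Bp hb' u0
    · exact Finset.sum_congr rfl fun e he => by rw [hdotbb e he]
  · funext x
    have hx := hpt x
    have hbasex : base x = deg H x * u0 x - f x := by rw [hbase]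
    rw [hbasex] at hx
    simp only [Pi.add_apply, Pi.smul_apply, smul_eq_mul]
    have hsum : (∑ e ∈ H.E, (H.w e * mx e u0) • bb e) x
        = ∑ e ∈ H.E, (H.w e * mx e u0) * bb e x := by
      rw [Finset.sum_apply]
      exact Finset.sum_congr rfl fun e _ => by simp [Pi.smul_apply, smul_eq_mul]
    rw [hsum]
    linarith

-- ### Resolvent estimates

lemma resolvent_h_norm [Nonempty V] (H : Hypergraph V) (hdeg : ∀ x : V, 0 < deg H x)
    {l : ℝ} (hl : 0 < l) {f : V → ℝ} (hf : f ∈ Lip1 H) :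
    ∃ h ∈ NL H (Resolvent H l f), f = Resolvent H l f + l • h ∧
      nrm H h ≤ Real.sqrt 2 * Real.sqrt (vol H) := by
  obtain ⟨h, hmem, heq⟩ : ∃ h ∈ NL H (Resolvent H l f), f = Resolvent H l f + l • h :=
    Classical.epsilon_spec (resolvent_exists H hdeg hl f)
  refine ⟨h, hmem, heq, ?_⟩
  set g := Resolvent H l f with hg
  obtain ⟨h0, h0mem⟩ := Lap_nonempty H (Dinv H f)
  have h0mem' : h0 ∈ NL H f := h0mem
  have hb0 : nrm H h0 ≤ Real.sqrt 2 * Real.sqrt (vol H) := NL_norm_le hdeg hf h0mem'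
  have hfl : f - g = l • h := by
    funext z
    have hz := congrFun heq z
    simp only [Pi.add_apply, Pi.sub_apply, Pi.smul_apply, smul_eq_mul] at *
    linarith
  have h2 : inn H h (f - g) ≤ inn H h0 (f - g) := by
    have hmono := NL_mono hmem h0mem'
    have hswap : inn H (h - h0) (g - f) = inn H h0 (f - g) - inn H h (f - g) := by
      simp only [inn_sub_left, inn_sub_right]; ring
    linarith
  have hCS : inn H h0 (f - g) ≤ nrm H h0 * nrm H (f - g) := inn_le hdeg _ _
  have hself : inn H (f - g) (f - g) ≤ l * (nrm H h0 * nrm H (f - g)) := by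
    have h1 : inn H (f - g) (f - g) = l * inn H h (f - g) := by
      nth_rewrite 1 [hfl]
      rw [inn_smul_left]
    rw [h1]
    have := mul_le_mul_of_nonneg_left (le_trans h2 hCS) hl.le
    linarith
  have hnormfg : nrm H (f - g) ≤ l * nrm H h0 := by
    rcases eq_or_lt_of_le (nrm_nonneg (H := H) (f - g)) with h0' | h0'
    · rw [← h0']
      exact mul_nonneg hl.le (nrm_nonneg _)
    · have hsq : nrm H (f - g) * nrm H (f - g) = inn H (f - g) (f - g) := by
        rw [← nrm_sq hdeg]; ring
      have hmul : nrm H (f - g) * nrm H (f - g) ≤ (l * nrm H h0) * nrm H (f - g) := by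
        rw [hsq]
        calc inn H (f - g) (f - g) ≤ l * (nrm H h0 * nrm H (f - g)) := hself
          _ = (l * nrm H h0) * nrm H (f - g) := by ring
      exact le_of_mul_le_mul_right hmul h0'
  have hh : h = l⁻¹ • (f - g) := by
    rw [hfl, smul_smul, inv_mul_cancel₀ hl.ne', one_smul]
  rw [hh, nrm_smul, abs_inv, abs_of_pos hl]
  calc l⁻¹ * nrm H (f - g) ≤ l⁻¹ * (l * nrm H h0) :=
        mul_le_mul_of_nonneg_left hnormfg (inv_nonneg.2 hl.le)
    _ = nrm H h0 := by field_simp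
    _ ≤ Real.sqrt 2 * Real.sqrt (vol H) := hb0

lemma resolvent_dist [Nonempty V] (H : Hypergraph V) (hdeg : ∀ x : V, 0 < deg H x)
    {l m : ℝ} (hl : 0 < l) (hm : 0 < m) {f : V → ℝ} (hf : f ∈ Lip1 H) :
    nrm H (Resolvent H l f - Resolvent H m f)
      ≤ |l - m| * (Real.sqrt 2 * Real.sqrt (vol H)) := by
  obtain ⟨hL, hLmem, hLeq, hLnorm⟩ := resolvent_h_norm H hdeg hl hf
  obtain ⟨hM, hMmem, hMeq, _⟩ := resolvent_h_norm H hdeg hm hf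
  set gl := Resolvent H l f
  set gm := Resolvent H m f
  have hgg : gl - gm = m • (hM - hL) + (m - l) • hL := by
    funext z
    have h1 := congrFun hLeq z
    have h2 := congrFun hMeq z
    simp only [Pi.add_apply, Pi.sub_apply, Pi.smul_apply, smul_eq_mul] at *
    linear_combination h2 - h1
  have hmono := NL_mono hMmem hLmem
  have hkey : inn H (gl - gm) (gl - gm) ≤ (m - l) * inn H hL (gl - gm) := by
    nth_rewrite 1 [hgg]
    rw [inn_add_left, inn_smul_left, inn_smul_left]
    have hswap : inn H (hM - hL) (gl - gm) = - inn H (hM - hL) (gm - gl) := by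
      simp only [inn_sub_left, inn_sub_right]; ring
    have hneg : m * inn H (hM - hL) (gl - gm) ≤ 0 :=
      mul_nonpos_of_nonneg_of_nonpos hm.le (by linarith)
    linarith
  have habs : (m - l) * inn H hL (gl - gm)
      ≤ |l - m| * ((Real.sqrt 2 * Real.sqrt (vol H)) * nrm H (gl - gm)) := by
    calc (m - l) * inn H hL (gl - gm) ≤ |(m - l) * inn H hL (gl - gm)| := le_abs_self _
      _ = |m - l| * |inn H hL (gl - gm)| := abs_mul _ _
      _ ≤ |m - l| * (nrm H hL * nrm H (gl - gm)) :=
          mul_le_mul_of_nonneg_left (abs_inn_le hdeg _ _) (abs_nonneg _)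
      _ ≤ |l - m| * ((Real.sqrt 2 * Real.sqrt (vol H)) * nrm H (gl - gm)) := by
          rw [abs_sub_comm m l]
          exact mul_le_mul_of_nonneg_left
            (mul_le_mul_of_nonneg_right hLnorm (nrm_nonneg _)) (abs_nonneg _)
  rcases eq_or_lt_of_le (nrm_nonneg (H := H) (gl - gm)) with h0 | h0
  · rw [← h0]
    exact mul_nonneg (abs_nonneg _) (mul_nonneg (Real.sqrt_nonneg _) (Real.sqrt_nonneg _))
  · have hsq : nrm H (gl - gm) * nrm H (gl - gm) = inn H (gl - gm) (gl - gm) := by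
      rw [← nrm_sq hdeg]; ring
    have hmul : nrm H (gl - gm) * nrm H (gl - gm)
        ≤ (|l - m| * (Real.sqrt 2 * Real.sqrt (vol H))) * nrm H (gl - gm) := by
      rw [hsq]
      calc inn H (gl - gm) (gl - gm) ≤ (m - l) * inn H hL (gl - gm) := hkey
        _ ≤ |l - m| * ((Real.sqrt 2 * Real.sqrt (vol H)) * nrm H (gl - gm)) := habs
        _ = (|l - m| * (Real.sqrt 2 * Real.sqrt (vol H))) * nrm H (gl - gm) := by ring
    exact le_of_mul_le_mul_right hmul h0

lemma nrm_delta_le [Nonempty V] (hdeg : ∀ x : V, 0 < deg H x) (x y : V) :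
    nrm H (delta x - delta y)
      ≤ Real.sqrt 2 * (⨆ z : V, 1 / Real.sqrt (deg H z)) := by
  set M := ⨆ z : V, 1 / Real.sqrt (deg H z) with hM
  have hMge : ∀ z : V, 1 / Real.sqrt (deg H z) ≤ M :=
    fun z => le_ciSup (f := fun z : V => 1 / Real.sqrt (deg H z))
      (Set.Finite.bddAbove (Set.finite_range _)) z
  have hM0 : 0 ≤ M :=
    le_trans (by positivity) (hMge (Classical.arbitrary V))
  have hinvle : ∀ z : V, 1 / deg H z ≤ M ^ 2 := by
    intro z
    have h1 : 1 / deg H z = (1 / Real.sqrt (deg H z)) ^ 2 := by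
      rw [div_pow, one_pow, Real.sq_sqrt (hdeg z).le]
    rw [h1]
    exact pow_le_pow_left₀ (by positivity) (hMge z) 2
  have hinnle : inn H (delta x - delta y) (delta x - delta y) ≤ 2 * M ^ 2 := by
    have hptwise : ∀ z : V,
        (delta x - delta y) z * (delta x - delta y) z / deg H z
          ≤ (if z = x then 1 / deg H z else 0) + (if z = y then 1 / deg H z else 0) := by
      intro z
      have hdz := hdeg z
      by_cases h1 : z = x <;> by_cases h2 : z = y <;> subst_vars <;>
        simp_all [delta] <;> first
        | exact (hdeg _).le
        | positivity
    calc inn H (delta x - delta y) (delta x - delta y)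
        ≤ ∑ z, ((if z = x then 1 / deg H z else 0) + (if z = y then 1 / deg H z else 0)) :=
          Finset.sum_le_sum fun z _ => hptwise z
      _ = 1 / deg H x + 1 / deg H y := by
          rw [Finset.sum_add_distrib,
            Finset.sum_ite_eq' Finset.univ x (fun z => 1 / deg H z),
            Finset.sum_ite_eq' Finset.univ y (fun z => 1 / deg H z)]
          simp
      _ ≤ M ^ 2 + M ^ 2 := add_le_add (hinvle x) (hinvle y)
      _ = 2 * M ^ 2 := by ring
  unfold nrm
  calc Real.sqrt (inn H (delta x - delta y) (delta x - delta y))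
      ≤ Real.sqrt (2 * M ^ 2) := Real.sqrt_le_sqrt hinnle
    _ = Real.sqrt 2 * M := by
        rw [Real.sqrt_mul (by norm_num : (0:ℝ) ≤ 2), Real.sqrt_sq hM0]

lemma zero_mem_Lip1 (H : Hypergraph V) : (0 : V → ℝ) ∈ Lip1 H := by
  intro x y
  have h0 : inn H 0 (delta x - delta y) = 0 := by simp [inn]
  rw [h0]
  exact Nat.cast_nonneg _

lemma KD_le_KD [Nonempty V] (H : Hypergraph V) (hdeg : ∀ x : V, 0 < deg H x)
    {l m : ℝ} (hl : 0 < l) (hm : 0 < m) (x y : V) :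
    KD H l x y ≤ KD H m x y + |l - m| * ((Real.sqrt 2 * Real.sqrt (vol H)) *
      (Real.sqrt 2 * (⨆ z : V, 1 / Real.sqrt (deg H z)))) := by
  set M := ⨆ z : V, 1 / Real.sqrt (deg H z) with hM
  have hbdd : BddAbove {r | ∃ f ∈ Lip1 H, r = inn H (Resolvent H m f) (delta x - delta y)} := by
    refine ⟨gdist H x y + m * ((Real.sqrt 2 * Real.sqrt (vol H)) * (Real.sqrt 2 * M)), ?_⟩
    rintro r ⟨f, hf, rfl⟩
    obtain ⟨h, hmem, heq, hnorm⟩ := resolvent_h_norm H hdeg hm hf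
    have hgeq : Resolvent H m f = f - m • h := by
      funext z
      have hz := congrFun heq z
      simp only [Pi.add_apply, Pi.sub_apply, Pi.smul_apply, smul_eq_mul] at *
      linarith
    have hval : inn H (Resolvent H m f) (delta x - delta y)
        = inn H f (delta x - delta y) - m * inn H h (delta x - delta y) := by
      rw [hgeq, inn_sub_left, inn_smul_left]
    rw [hval]
    have h1 : inn H f (delta x - delta y) ≤ gdist H x y := hf x y
    have h2 : |inn H h (delta x - delta y)|
        ≤ (Real.sqrt 2 * Real.sqrt (vol H)) * (Real.sqrt 2 * M) := by
      refine le_trans (abs_inn_le hdeg _ _) ?_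
      exact mul_le_mul hnorm (nrm_delta_le hdeg x y) (nrm_nonneg _) (by positivity)
    have h3 : -(m * inn H h (delta x - delta y))
        ≤ m * ((Real.sqrt 2 * Real.sqrt (vol H)) * (Real.sqrt 2 * M)) := by
      calc -(m * inn H h (delta x - delta y)) = m * (- inn H h (delta x - delta y)) := by ring
        _ ≤ m * |inn H h (delta x - delta y)| :=
            mul_le_mul_of_nonneg_left (neg_le_abs _) hm.le
        _ ≤ m * ((Real.sqrt 2 * Real.sqrt (vol H)) * (Real.sqrt 2 * M)) :=
            mul_le_mul_of_nonneg_left h2 hm.le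
    linarith
  have hne : {r | ∃ f ∈ Lip1 H, r = inn H (Resolvent H l f) (delta x - delta y)}.Nonempty :=
    ⟨_, 0, zero_mem_Lip1 H, rfl⟩
  unfold KD
  refine csSup_le hne ?_
  rintro r ⟨f, hf, rfl⟩
  have hdist := resolvent_dist H hdeg hl hm hf
  have hsplit : inn H (Resolvent H l f) (delta x - delta y)
      = inn H (Resolvent H m f) (delta x - delta y)
        + inn H (Resolvent H l f - Resolvent H m f) (delta x - delta y) := by
    rw [inn_sub_left]; ring
  have hbound : inn H (Resolvent H l f - Resolvent H m f) (delta x - delta y)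
      ≤ |l - m| * ((Real.sqrt 2 * Real.sqrt (vol H)) * (Real.sqrt 2 * M)) := by
    calc inn H (Resolvent H l f - Resolvent H m f) (delta x - delta y)
        ≤ nrm H (Resolvent H l f - Resolvent H m f) * nrm H (delta x - delta y) :=
          inn_le hdeg _ _
      _ ≤ (|l - m| * (Real.sqrt 2 * Real.sqrt (vol H))) * (Real.sqrt 2 * M) :=
          mul_le_mul hdist (nrm_delta_le hdeg x y) (nrm_nonneg _) (by positivity)
      _ = |l - m| * ((Real.sqrt 2 * Real.sqrt (vol H)) * (Real.sqrt 2 * M)) := by ring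
  have hmem2 : inn H (Resolvent H m f) (delta x - delta y)
      ≤ sSup {r | ∃ f ∈ Lip1 H, r = inn H (Resolvent H m f) (delta x - delta y)} :=
    le_csSup hbdd ⟨f, hf, rfl⟩
  linarith

/-- Lipschitz dependence of `KD_λ(x,y)` on `λ`:
`|KD_λ − KD_μ| ≤ 2 M vol(V)^{1/2} |λ − μ|` with `M = max_x d_x^{-1/2}`. -/
theorem stmt10 [Nonempty V] (H : Hypergraph V) (hconn : Connected H)
    (hdeg : ∀ x : V, 0 < deg H x) (l m : ℝ) (hl : 0 < l) (hm : 0 < m) (x y : V) :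
    |KD H l x y - KD H m x y| ≤
      2 * (⨆ z : V, 1 / Real.sqrt (deg H z)) * Real.sqrt (vol H) * |l - m| := by
  have h1 := KD_le_KD H hdeg hl hm x y
  have h2 := KD_le_KD H hdeg hm hl x y
  set M := ⨆ z : V, 1 / Real.sqrt (deg H z) with hM
  have h22 : Real.sqrt 2 * Real.sqrt 2 = 2 := Real.mul_self_sqrt (by norm_num)
  have hCeq : (Real.sqrt 2 * Real.sqrt (vol H)) * (Real.sqrt 2 * M)
      = 2 * M * Real.sqrt (vol H) := by
    calc (Real.sqrt 2 * Real.sqrt (vol H)) * (Real.sqrt 2 * M)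
        = (Real.sqrt 2 * Real.sqrt 2) * (M * Real.sqrt (vol H)) := by ring
      _ = 2 * M * Real.sqrt (vol H) := by rw [h22]; ring
  have e1 : |l - m| * ((Real.sqrt 2 * Real.sqrt (vol H)) * (Real.sqrt 2 * M))
      = 2 * M * Real.sqrt (vol H) * |l - m| := by rw [hCeq]; ring
  have e2 : |m - l| * ((Real.sqrt 2 * Real.sqrt (vol H)) * (Real.sqrt 2 * M))
      = 2 * M * Real.sqrt (vol H) * |l - m| := by rw [hCeq, abs_sub_comm m l]; ring
  rw [abs_sub_le_iff]
  constructor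
  · linarith [h1, e1]
  · linarith [h2, e2]

end HypRicci
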